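/- Transport lemma for the canonical game: For any maximal consistent set X_0, any outcomes ω, ω' of the canonical game G(X_0), any coalition C, and any formula φ ∈ Φ, if ω ∼_C ω' and K_C φ ∈ hd(ω), then φ ∈ hd(ω'). -/

import Mathlib

inductive Formula (A Prp : Type) : Type
  | var : Prp → Formula A Prp
  | bot : Formula A Prp
  | neg : Formula A Prp → Formula A Prp
  | imp : Formula A Prp → Formula A Prp → Formula A Prp
  | know : Set A → Formula A Prp → Formula A Prp
  | blame : Set A → Formula A Prp → Formula A Prp

namespace Formula
variable {A Prp : Type}
def top : Formula A Prp := neg bot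
def or (φ ψ : Formula A Prp) : Formula A Prp := imp (neg φ) ψ
def and (φ ψ : Formula A Prp) : Formula A Prp := neg (imp φ (neg ψ))
def kbar (C : Set A) (φ : Formula A Prp) : Formula A Prp := neg (know C (neg φ))
end Formula

def evalF {A Prp : Type} (v : Formula A Prp → Prop) : Formula A Prp → Prop
  | .var p => v (.var p)
  | .bot => False
  | .neg φ => ¬ evalF v φ
  | .imp φ ψ => evalF v φ → evalF v ψ
  | .know C φ => v (.know C φ)
  | .blame C φ => v (.blame C φ)

def Tautology {A Prp : Type} (φ : Formula A Prp) : Prop := ∀ v, evalF v φ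

inductive Provable {A Prp : Type} : Formula A Prp → Prop
  | taut {φ} : Tautology φ → Provable φ
  | truthK {C φ} : Provable (.imp (.know C φ) φ)
  | truthB {C φ} : Provable (.imp (.blame C φ) φ)
  | distr {C φ ψ} : Provable (.imp (.know C (.imp φ ψ)) (.imp (.know C φ) (.know C ψ)))
  | negIntro {C φ} : Provable (.imp (.neg (.know C φ)) (.know C (.neg (.know C φ))))
  | monoK {C D φ} (h : C ⊆ D) : Provable (.imp (.know C φ) (.know D φ))
  | monoB {C D φ} (h : C ⊆ D) : Provable (.imp (.blame C φ) (.blame D φ))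
  | noneBlame {φ} : Provable (.neg (.blame (∅ : Set A) φ))
  | blameTop {C} : Provable (.neg (.blame C Formula.top))
  | jointResp {C D φ ψ} (h : Disjoint C D) :
      Provable (.imp (.and (.kbar C (.blame C φ)) (.kbar D (.blame D ψ)))
        (.imp (.or φ ψ) (.blame (C ∪ D) (.or φ ψ))))
  | knownCause {C φ ψ} :
      Provable (.imp (.know C (.imp φ ψ)) (.imp (.blame C ψ) (.imp φ (.blame C φ))))
  | fairness {C φ} : Provable (.imp (.blame C φ) (.know C (.imp φ (.blame C φ))))
  | mp {φ ψ} : Provable (.imp φ ψ) → Provable φ → Provable ψ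
  | nec {C φ} : Provable φ → Provable (.know C φ)

inductive ProvableFrom {A Prp : Type} (X : Set (Formula A Prp)) : Formula A Prp → Prop
  | thm {φ} : Provable φ → ProvableFrom X φ
  | hyp {φ} : φ ∈ X → ProvableFrom X φ
  | mp {φ ψ} : ProvableFrom X (.imp φ ψ) → ProvableFrom X φ → ProvableFrom X ψ

def Consistent {A Prp : Type} (X : Set (Formula A Prp)) : Prop :=
  ¬ ProvableFrom X Formula.bot

/-- Maximal consistent set of formulae. -/
def MaxCons {A Prp : Type} (X : Set (Formula A Prp)) : Prop :=
  Consistent X ∧ ∀ Y, Consistent Y → X ⊆ Y → Y = X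

/-- A valid chain `C₁, X₁, …, Cₙ, Xₙ` extending a set `X`: each `Xᵢ` is maximal
consistent and `{φ | K_{Cᵢ} φ ∈ X_{i-1}} ⊆ Xᵢ`. -/
def ValidChain {A Prp : Type} :
    Set (Formula A Prp) → List (Set A × Set (Formula A Prp)) → Prop
  | _, [] => True
  | X, (C, Y) :: rest =>
      MaxCons Y ∧ (∀ φ, Formula.know C φ ∈ X → φ ∈ Y) ∧ ValidChain Y rest

/-- Outcomes of the canonical game `G(X₀)`: the sequences `X₀, C₁, X₁, …, Cₙ, Xₙ`. -/
def COutcome {A Prp : Type} (X₀ : Set (Formula A Prp)) :=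
  {l : List (Set A × Set (Formula A Prp)) // ValidChain X₀ l}

/-- `hd ω`: the last maximal consistent set of the sequence ω. -/
def hd {A Prp : Type} (X₀ : Set (Formula A Prp)) (ω : COutcome X₀) :
    Set (Formula A Prp) :=
  (ω.1.map Prod.snd).getLastD X₀

/-- `ω ∼_a ω'`: every edge along the unique path between the tree nodes ω and ω'
is labeled with agent a (equivalently, after removing a common prefix, every
coalition label remaining in either sequence contains a). -/
def simOut {A Prp : Type} (X₀ : Set (Formula A Prp)) (a : A) (ω ω' : COutcome X₀) : Prop :=
  ∃ ρ t₁ t₂, ω.1 = ρ ++ t₁ ∧ ω'.1 = ρ ++ t₂ ∧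
    (∀ st ∈ t₁, a ∈ st.1) ∧ (∀ st ∈ t₂, a ∈ st.1)

/-- `ω ∼_C ω'`. -/
def simOutC {A Prp : Type} (X₀ : Set (Formula A Prp)) (C : Set A)
    (ω ω' : COutcome X₀) : Prop :=
  ∀ a ∈ C, simOut X₀ a ω ω'

/-- Initial states of the canonical game: equivalence classes Ω/∼_𝒜. -/
def CanonI {A Prp : Type} (X₀ : Set (Formula A Prp)) :=
  Quot (fun ω ω' : COutcome X₀ => ∀ a : A, simOut X₀ a ω ω')

/-- `α ∼_C α'` on initial states. -/
def simIC {A Prp : Type} (X₀ : Set (Formula A Prp)) (C : Set A)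
    (α α' : CanonI X₀) : Prop :=
  ∃ ω ω' : COutcome X₀, Quot.mk _ ω = α ∧ Quot.mk _ ω' = α' ∧ simOutC X₀ C ω ω'

/-- Plays of the canonical game `G(X₀)`: triples `(α, δ, ω)` such that `ω ∈ α` and
for every formula `K̄_C B_C ψ ∈ hd(ω)`, if `δ(a) = ψ` for each `a ∈ C`, then
`¬ψ ∈ hd(ω)`. The set of actions is Δ = Φ. -/
def CanonP {A Prp : Type} (X₀ : Set (Formula A Prp)) :
    Set (CanonI X₀ × (A → Formula A Prp) × COutcome X₀) :=
  {t | Quot.mk _ t.2.2 = t.1 ∧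
    ∀ (C : Set A) (ψ : Formula A Prp),
      Formula.kbar C (Formula.blame C ψ) ∈ hd X₀ t.2.2 →
      (∀ a ∈ C, t.2.1 a = ψ) → Formula.neg ψ ∈ hd X₀ t.2.2}

section Aux
variable {A Prp : Type}

open Formula

lemma taut_of_tauto {φ : Formula A Prp} (h : ∀ v, evalF v φ) : Provable φ :=
  Provable.taut h

lemma deduction {X : Set (Formula A Prp)} {φ ψ : Formula A Prp}
    (h : ProvableFrom (insert φ X) ψ) : ProvableFrom X (.imp φ ψ) := by
  induction h with
  | @thm χ h =>
      exact .mp (.thm (.taut (by intro v; simp only [evalF]; tauto))) (.thm h)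
  | @hyp χ h =>
      rcases h with h | h
      · subst h; exact .thm (.taut (by intro v; simp [evalF]))
      · exact .mp (.thm (.taut (by intro v; simp only [evalF]; tauto))) (.hyp h)
  | @mp χ θ h1 h2 ih1 ih2 =>
      exact .mp (.mp (.thm (.taut (by intro v; simp only [evalF]; tauto))) ih1) ih2

lemma pf_of_insert {X : Set (Formula A Prp)} {ψ χ : Formula A Prp}
    (h : ProvableFrom X ψ) (h2 : ProvableFrom (insert ψ X) χ) : ProvableFrom X χ := by
  induction h2 with
  | thm h' => exact .thm h'
  | hyp h' => rcases h' with h' | h'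
              · subst h'; exact h
              · exact .hyp h'
  | mp _ _ ih1 ih2 => exact .mp ih1 ih2

lemma mcs_closed {X : Set (Formula A Prp)} {φ : Formula A Prp}
    (hX : MaxCons X) (h : ProvableFrom X φ) : φ ∈ X := by
  have hcons : Consistent (insert φ X) := fun hbot => hX.1 (pf_of_insert h hbot)
  have := hX.2 _ hcons (Set.subset_insert _ _)
  rw [← this]; exact Set.mem_insert _ _

lemma mcs_thm {X : Set (Formula A Prp)} {φ : Formula A Prp}
    (hX : MaxCons X) (h : Provable φ) : φ ∈ X := mcs_closed hX (.thm h)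

lemma mcs_mp {X : Set (Formula A Prp)} {φ ψ : Formula A Prp}
    (hX : MaxCons X) (h1 : Formula.imp φ ψ ∈ X) (h2 : φ ∈ X) : ψ ∈ X :=
  mcs_closed hX (.mp (.hyp h1) (.hyp h2))

lemma mcs_neg {X : Set (Formula A Prp)} {φ : Formula A Prp}
    (hX : MaxCons X) (h : φ ∉ X) : Formula.neg φ ∈ X := by
  by_cases hc : Consistent (insert φ X)
  · exact absurd (hX.2 _ hc (Set.subset_insert _ _) ▸ Set.mem_insert φ X) h
  · have hb : ProvableFrom (insert φ X) .bot := by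
      by_contra hb; exact hc hb
    have := deduction hb
    exact mcs_closed hX (.mp (.thm (.taut (by intro v; simp only [evalF]; tauto))) this)

lemma mcs_not_both {X : Set (Formula A Prp)} {φ : Formula A Prp}
    (hX : MaxCons X) (h : Formula.neg φ ∈ X) : φ ∉ X := by
  intro hφ
  exact hX.1 (.mp (.mp (.thm (.taut (φ := .imp φ (.imp (.neg φ) .bot))
    (by intro v; simp only [evalF]; tauto))) (.hyp hφ)) (.hyp h))

/-- Positive introspection: K_C φ → K_C K_C φ. -/
lemma posIntro {C : Set A} {φ : Formula A Prp} :
    Provable (.imp (.know C φ) (.know C (.know C φ))) := by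
  -- s1 : ¬K¬Kφ → Kφ   (contrapositive of negative introspection)
  have s1 : Provable (.imp (.neg (.know C (.neg (.know C φ)))) (.know C φ)) :=
    .mp (.taut (by intro v; simp only [evalF]; tauto)) (.negIntro (C := C) (φ := φ))
  -- s2 : K¬K¬Kφ → KKφ
  have s2 : Provable (.imp (.know C (.neg (.know C (.neg (.know C φ)))))
      (.know C (.know C φ))) := .mp .distr (.nec s1)
  -- s3 (B instance) : Kφ → K¬K¬Kφ
  have s3 : Provable (.imp (.know C φ)
      (.know C (.neg (.know C (.neg (.know C φ)))))) := by
    have t : Provable (.imp (.know C (.neg (.know C φ))) (.neg (.know C φ))) :=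
      .truthK
    have ni : Provable (.imp (.neg (.know C (.neg (.know C φ))))
        (.know C (.neg (.know C (.neg (.know C φ)))))) := .negIntro
    exact .mp (.mp (.taut (by intro v; simp only [evalF]; tauto)) t) ni
  exact .mp (.mp (.taut (by intro v; simp only [evalF]; tauto)) s3) s2

/-- Transfer of K_C-formulae across one edge labeled D ⊇ C. -/
lemma edge_transfer {X Y : Set (Formula A Prp)} {C D : Set A} {φ : Formula A Prp}
    (hX : MaxCons X) (hY : MaxCons Y)
    (hE : ∀ ψ, Formula.know D ψ ∈ X → ψ ∈ Y) (hCD : C ⊆ D) :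
    Formula.know C φ ∈ X ↔ Formula.know C φ ∈ Y := by
  constructor
  · intro h
    have h1 : Formula.know C (.know C φ) ∈ X := mcs_mp hX (mcs_thm hX posIntro) h
    have h2 : Formula.know D (.know C φ) ∈ X :=
      mcs_mp hX (mcs_thm hX (.monoK hCD)) h1
    exact hE _ h2
  · intro h
    by_contra hn
    have h1 : Formula.neg (.know C φ) ∈ X := mcs_neg hX hn
    have h2 : Formula.know C (.neg (.know C φ)) ∈ X :=
      mcs_mp hX (mcs_thm hX .negIntro) h1
    have h3 : Formula.know D (.neg (.know C φ)) ∈ X :=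
      mcs_mp hX (mcs_thm hX (.monoK hCD)) h2
    exact mcs_not_both hY (hE _ h3) h

def hdOf (X : Set (Formula A Prp)) (l : List (Set A × Set (Formula A Prp))) :
    Set (Formula A Prp) := (l.map Prod.snd).getLastD X

@[simp] lemma hdOf_nil (X : Set (Formula A Prp)) : hdOf X [] = X := rfl

@[simp] lemma hdOf_cons (X : Set (Formula A Prp)) (st : Set A × Set (Formula A Prp))
    (l : List (Set A × Set (Formula A Prp))) : hdOf X (st :: l) = hdOf st.2 l := by
  show (st.2 :: l.map Prod.snd).getLastD X = hdOf st.2 l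
  rw [List.getLastD_cons]; rfl

lemma hdOf_append (X : Set (Formula A Prp)) (l₁ l₂ : List (Set A × Set (Formula A Prp))) :
    hdOf X (l₁ ++ l₂) = hdOf (hdOf X l₁) l₂ := by
  induction l₁ generalizing X with
  | nil => simp
  | cons st l ih => simp [ih]

lemma chain_split {X : Set (Formula A Prp)} {l₁ l₂ : List (Set A × Set (Formula A Prp))}
    (h : ValidChain X (l₁ ++ l₂)) : ValidChain X l₁ ∧ ValidChain (hdOf X l₁) l₂ := by
  induction l₁ generalizing X with
  | nil => exact ⟨trivial, h⟩
  | cons st l ih =>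
      obtain ⟨hY, hK, hrest⟩ := h
      obtain ⟨h1, h2⟩ := ih hrest
      exact ⟨⟨hY, hK, h1⟩, by simpa using h2⟩

lemma hdOf_maxcons {X : Set (Formula A Prp)} {l : List (Set A × Set (Formula A Prp))}
    (hX : MaxCons X) (h : ValidChain X l) : MaxCons (hdOf X l) := by
  induction l generalizing X with
  | nil => exact hX
  | cons st l ih =>
      obtain ⟨hY, _, hrest⟩ := h
      simpa using ih hY hrest

lemma chain_transfer {X : Set (Formula A Prp)} {l : List (Set A × Set (Formula A Prp))}
    {C : Set A} {φ : Formula A Prp} (hX : MaxCons X) (h : ValidChain X l)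
    (hl : ∀ st ∈ l, C ⊆ st.1) :
    (Formula.know C φ ∈ X ↔ Formula.know C φ ∈ hdOf X l) := by
  induction l generalizing X with
  | nil => rfl
  | cons st l ih =>
      obtain ⟨hY, hK, hrest⟩ := h
      have e : Formula.know C φ ∈ X ↔ Formula.know C φ ∈ st.2 :=
        edge_transfer hX hY hK (hl st List.mem_cons_self)
      rw [e, hdOf_cons]
      exact ih hY hrest (fun s hs => hl s (List.mem_cons_of_mem _ hs))

end Aux

/-- Transport lemma for the canonical game: if ω ∼_C ω' and K_C φ ∈ hd(ω),
then φ ∈ hd(ω'). -/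
theorem transport {A Prp : Type} (X₀ : Set (Formula A Prp)) (hX₀ : MaxCons X₀)
    (ω ω' : COutcome X₀) (C : Set A) (φ : Formula A Prp)
    (h1 : simOutC X₀ C ω ω') (h2 : Formula.know C φ ∈ hd X₀ ω) :
    φ ∈ hd X₀ ω' := by
  classical
  have key : ∃ ρ t₁ t₂, ω.1 = ρ ++ t₁ ∧ ω'.1 = ρ ++ t₂ ∧
      (∀ st ∈ t₁, C ⊆ st.1) ∧ (∀ st ∈ t₂, C ⊆ st.1) := by
    rcases Set.eq_empty_or_nonempty C with hC | ⟨a₀, ha₀⟩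
    · exact ⟨[], ω.1, ω'.1, rfl, rfl, by simp [hC], by simp [hC]⟩
    · choose ρ t₁ t₂ he he' ht₁ ht₂ using h1
      set S : Set ℕ := {n | ∃ a, ∃ ha : a ∈ C, (ρ a ha).length = n} with hS
      have hne : S.Nonempty := ⟨_, a₀, ha₀, rfl⟩
      have hbdd : BddAbove S := by
        refine ⟨ω.1.length, ?_⟩
        rintro n ⟨a, ha, rfl⟩
        rw [he a ha]; simp
      obtain ⟨b, hb, hlen⟩ := Nat.sSup_mem hne hbdd
      refine ⟨ρ b hb, t₁ b hb, t₂ b hb, he b hb, he' b hb, ?_, ?_⟩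
      all_goals intro st hst a ha
      · obtain ⟨σ, hσ⟩ : ρ a ha <+: ρ b hb := by
          refine List.prefix_of_prefix_length_le ⟨t₁ a ha, (he a ha).symm⟩
            ⟨t₁ b hb, (he b hb).symm⟩ ?_
          rw [hlen]; exact le_csSup hbdd ⟨a, ha, rfl⟩
        have : t₁ a ha = σ ++ t₁ b hb := by
          apply List.append_cancel_left (as := ρ a ha)
          rw [← he a ha, ← List.append_assoc, hσ]
          exact he b hb
        exact ht₁ a ha st (this ▸ List.mem_append_right σ hst)
      · obtain ⟨σ, hσ⟩ : ρ a ha <+: ρ b hb := by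
          refine List.prefix_of_prefix_length_le ⟨t₁ a ha, (he a ha).symm⟩
            ⟨t₁ b hb, (he b hb).symm⟩ ?_
          rw [hlen]; exact le_csSup hbdd ⟨a, ha, rfl⟩
        have : t₂ a ha = σ ++ t₂ b hb := by
          apply List.append_cancel_left (as := ρ a ha)
          rw [← he' a ha, ← List.append_assoc, hσ]
          exact he' b hb
        exact ht₂ a ha st (this ▸ List.mem_append_right σ hst)
  obtain ⟨ρ, t₁, t₂, he, he', hl₁, hl₂⟩ := key
  have hc1 := ω.2
  rw [he] at hc1
  obtain ⟨hρ, ht⟩ := chain_split hc1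
  have hM : MaxCons (hdOf X₀ ρ) := hdOf_maxcons hX₀ hρ
  have hc2 := ω'.2
  rw [he'] at hc2
  obtain ⟨_, ht'⟩ := chain_split hc2
  have hhd : hd X₀ ω = hdOf (hdOf X₀ ρ) t₁ := by
    show hdOf X₀ ω.1 = _
    rw [he, hdOf_append]
  have hhd' : hd X₀ ω' = hdOf (hdOf X₀ ρ) t₂ := by
    show hdOf X₀ ω'.1 = _
    rw [he', hdOf_append]
  have hK : Formula.know C φ ∈ hdOf X₀ ρ :=
    (chain_transfer hM ht hl₁).2 (hhd ▸ h2)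
  have hK' : Formula.know C φ ∈ hd X₀ ω' := by
    rw [hhd']
    exact (chain_transfer hM ht' hl₂).1 hK
  have hM' : MaxCons (hd X₀ ω') := by
    rw [hhd']
    exact hdOf_maxcons hM ht'
  exact mcs_mp hM' (mcs_thm hM' .truthK) hK'
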